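/- Let {σ_j: A⁺ → B_j⁺}_{j∈J} be a family of morphisms such that for every fixed a ∈ A, ℓ_a := |σ_j(a)| is constant over j ∈ J, and let ℓ = Σ_{a∈A} ℓ_a. Let u, v ∈ A⁺ be words with |u| ≥ ℓ which start with different letters, and assume σ_j(u) is a prefix of σ_j(v) for every j ∈ J. Then there exist a letter-onto morphism q: A⁺ → C⁺ with #C < #A and morphisms p_j: C⁺ → B_j⁺ (j ∈ J) such that σ_j = p_j ∘ q for every j ∈ J, and for every fixed c ∈ C the length |p_j(c)| is constant over j ∈ J. -/

import Mathlib

namespace SAdicPaper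

/-- A morphism between the free semigroups `A⁺ → B⁺`, determined by the (nonempty)
images of the letters. -/
structure Morphism (A : Type*) (B : Type*) where
  toFun : A → List B
  ne : ∀ a, toFun a ≠ []

namespace Morphism

universe u v

variable {A B C : Type*}

/-- The image of a word under a morphism. -/
def word (τ : Morphism A B) : List A → List B
  | [] => []
  | a :: w => τ.toFun a ++ τ.word w

theorem word_ne (τ : Morphism A B) {w : List A} (hw : w ≠ []) : τ.word w ≠ [] := by
  cases w with
  | nil => exact absurd rfl hw
  | cons a w =>
    simp only [word]
    intro h
    exact τ.ne a (List.append_eq_nil_iff.mp h).1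

/-- The identity morphism. -/
protected def id (A : Type*) : Morphism A A :=
  ⟨fun a => [a], fun a => by simp⟩

/-- Composition of morphisms. -/
def comp (τ : Morphism B C) (σ : Morphism A B) : Morphism A C :=
  ⟨fun a => τ.word (σ.toFun a), fun a => τ.word_ne (σ.ne a)⟩

/-- `|τ|₁ = ∑_{a ∈ A} |τ(a)|`. -/
def len1 (τ : Morphism A B) [Fintype A] : ℕ := ∑ a, (τ.toFun a).length

/-- `τ` is `r`-proper: there are words `u, v` of length `r` such that every image `τ(a)`
starts with `u` and ends with `v`. -/
def RProper (τ : Morphism A B) (r : ℕ) : Prop :=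
  ∃ u v : List B, u.length = r ∧ v.length = r ∧ ∀ a, u <+: τ.toFun a ∧ v <:+ τ.toFun a

/-- `τ` is proper, i.e. `1`-proper. -/
protected def Proper (τ : Morphism A B) : Prop := τ.RProper 1

/-- Every letter of `B` occurs in some image `τ(a)`. -/
def LetterOnto (τ : Morphism A B) : Prop := ∀ b : B, ∃ a : A, b ∈ τ.toFun a

/-- Every letter of `B` occurs in every image `τ(a)`. -/
def Positive (τ : Morphism A B) : Prop := ∀ (a : A) (b : B), b ∈ τ.toFun a

/-- Transport a morphism along an equality of alphabets. -/
def castDom {A A' : Type u} {B : Type v} (h : A = A') (τ : Morphism A B) : Morphism A' B :=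
  h ▸ τ

/-- The cut points of the biinfinite concatenation `⋯ τ(x₋₁) . τ(x₀) τ(x₁) ⋯`
(where `τ(x₀)` starts at coordinate `0`). -/
def cut (τ : Morphism A B) (x : ℤ → A) (j : ℤ) : ℤ :=
  if 0 ≤ j then ∑ i ∈ Finset.range j.toNat, ((τ.toFun (x (i : ℤ))).length : ℤ)
  else -∑ i ∈ Finset.range (-j).toNat, ((τ.toFun (x (-(i : ℤ) - 1))).length : ℤ)

/-- The extension of a morphism to biinfinite sequences: `τ(x)` is the biinfinite
concatenation `⋯ τ(x₋₁) . τ(x₀) τ(x₁) ⋯`, with `τ(x₀)` starting at coordinate `0`. -/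
noncomputable def seq (τ : Morphism A B) (x : ℤ → A) : ℤ → B := fun n =>
  letI := Classical.dec (∃ j : ℤ, τ.cut x j ≤ n ∧ n < τ.cut x (j + 1))
  if h : ∃ j : ℤ, τ.cut x j ≤ n ∧ n < τ.cut x (j + 1) then
    (τ.toFun (x h.choose)).getD (n - τ.cut x h.choose).toNat
      ((τ.toFun (x 0)).head (τ.ne (x 0)))
  else (τ.toFun (x 0)).head (τ.ne (x 0))

end Morphism

variable {A B : Type*}

/-- The shift map `T`. -/
def shift (x : ℤ → A) : ℤ → A := fun n => x (n + 1)

/-- The iterate `T^k` of the shift. -/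
def shiftZ (k : ℤ) (x : ℤ → A) : ℤ → A := fun n => x (n + k)

/-- A subshift: a closed shift-invariant set of biinfinite sequences. -/
def IsSubshift [TopologicalSpace A] (X : Set (ℤ → A)) : Prop :=
  IsClosed X ∧ ∀ k : ℤ, shiftZ k '' X = X

/-- Every point of `X` has infinite orbit (no nonzero period). -/
def Aperiodic (X : Set (ℤ → A)) : Prop :=
  ∀ x ∈ X, ∀ k : ℤ, k ≠ 0 → shiftZ k x ≠ x

/-- The shift orbit of a point. -/
def orbit (x : ℤ → A) : Set (ℤ → A) := {y | ∃ k : ℤ, y = shiftZ k x}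

/-- A minimal subshift: every orbit is dense. -/
def IsMinimalSubshift [TopologicalSpace A] (X : Set (ℤ → A)) : Prop :=
  IsSubshift X ∧ X.Nonempty ∧ ∀ x ∈ X, X ⊆ closure (orbit x)

/-- A factor map between subshifts. -/
def IsFactorMap [TopologicalSpace A] [TopologicalSpace B]
    (X : Set (ℤ → A)) (Y : Set (ℤ → B)) (π : (ℤ → A) → (ℤ → B)) : Prop :=
  ContinuousOn π X ∧ π '' X = Y ∧ ∀ x ∈ X, π (shift x) = shift (π x)

/-- A conjugacy: a bijective factor map. -/
def IsConjugacy [TopologicalSpace A] [TopologicalSpace B]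
    (X : Set (ℤ → A)) (Y : Set (ℤ → B)) (π : (ℤ → A) → (ℤ → B)) : Prop :=
  IsFactorMap X Y π ∧ Set.InjOn π X

/-- Two subshifts are conjugate. -/
def Conjugate [TopologicalSpace A] [TopologicalSpace B]
    (X : Set (ℤ → A)) (Y : Set (ℤ → B)) : Prop :=
  ∃ π, IsConjugacy X Y π

/-- `⋃_{k ∈ ℤ} T^k τ(X)`. -/
def morphImage (τ : Morphism A B) (X : Set (ℤ → A)) : Set (ℤ → B) :=
  {y | ∃ k : ℤ, ∃ x ∈ X, y = shiftZ k (τ.seq x)}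

/-- The finite subword `x_{[i, i+m)}` of a biinfinite sequence. -/
def subword (x : ℤ → A) (i : ℤ) (m : ℕ) : List A :=
  (List.range m).map fun t => x (i + (t : ℤ))

/-- A centered `τ`-factorization `(k, x)` of `y` in `X`. -/
def IsCenteredFactorization (τ : Morphism A B) (X : Set (ℤ → A))
    (y : ℤ → B) (k : ℤ) (x : ℤ → A) : Prop :=
  x ∈ X ∧ y = shiftZ k (τ.seq x) ∧ 0 ≤ k ∧ k < ((τ.toFun (x 0)).length : ℤ)

/-- The pair `(X, τ)` is recognizable: every point has at most one centered
`τ`-factorization in `X`. -/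
def Recognizable (X : Set (ℤ → A)) (τ : Morphism A B) : Prop :=
  ∀ y k x k' x', IsCenteredFactorization τ X y k x →
    IsCenteredFactorization τ X y k' x' → k = k' ∧ x = x'

/-- Centered right asymptotic pair. -/
def CenteredRightAsymptotic (x x' : ℤ → A) : Prop :=
  (∀ n : ℤ, 0 < n → x n = x' n) ∧ x 0 ≠ x' 0

/-- Centered left asymptotic pair. -/
def CenteredLeftAsymptotic (x x' : ℤ → A) : Prop :=
  (∀ n : ℤ, n < 0 → x n = x' n) ∧ x 0 ≠ x' 0

/-- Right asymptotic pair. -/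
def RightAsymptotic (x x' : ℤ → A) : Prop :=
  ∃ k : ℤ, CenteredRightAsymptotic (shiftZ k x) (shiftZ k x')

/-- Left asymptotic pair. -/
def LeftAsymptotic (x x' : ℤ → A) : Prop :=
  ∃ k : ℤ, CenteredLeftAsymptotic (shiftZ k x) (shiftZ k x')

/-- A distal factor map: points of a common fiber stay at a distance bounded below along
the orbit (stated for the standard metric `dist(x, y) = 2^{-min{|i| : xᵢ ≠ yᵢ}}`). -/
def IsDistalFactor (X : Set (ℤ → A)) (π : (ℤ → A) → (ℤ → B)) : Prop :=
  ∀ x ∈ X, ∀ x' ∈ X, π x = π x' → x ≠ x' →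
    ∃ m : ℕ, ∀ k : ℤ, ∃ i : ℤ, |i| ≤ (m : ℤ) ∧ x (k + i) ≠ x' (k + i)

/-- `π` is almost `k`-to-`1`: the fibers over a residual subset of `Y` have exactly `k`
elements. -/
def AlmostKto1 [TopologicalSpace A] [TopologicalSpace B]
    (X : Set (ℤ → A)) (Y : Set (ℤ → B)) (π : (ℤ → A) → (ℤ → B)) (k : ℕ) : Prop :=
  ∃ R : Set (ℤ → B), R ⊆ Y ∧ {y : ↥Y | (y : ℤ → B) ∈ R} ∈ residual ↥Y ∧
    ∀ y ∈ R, (X ∩ π ⁻¹' {y}).encard = (k : ℕ∞)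

/-- `π` has radius `r`: it is given by a local code `ψ` of radius `r` on `Y`. -/
def HasRadius {C : Type*} (Y : Set (ℤ → B)) (π : (ℤ → B) → (ℤ → C)) (r : ℕ) : Prop :=
  ∃ ψ : (Fin (2 * r + 1) → B) → C,
    ∀ y ∈ Y, ∀ i : ℤ, π y i = ψ fun t => y (i - (r : ℤ) + ((t : ℕ) : ℤ))

/-- A directive sequence `σ = (σ_n : A_{n+1}⁺ → A_n⁺)_{n ∈ ℕ}` with `A_0 = A0`;
here `alph n` is the alphabet `A_{n+1}`, `mor0 = σ_0` and `mor n = σ_{n+1}`. -/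
structure DirectiveSeq (A0 : Type) where
  alph : ℕ → Type
  fin : ∀ n, Fintype (alph n)
  mor0 : Morphism (alph 0) A0
  mor : ∀ n, Morphism (alph (n + 1)) (alph n)

attribute [instance] DirectiveSeq.fin

namespace DirectiveSeq

variable {A0 B0 : Type}

/-- `σ_{[0, N+1)} : A_{N+1}⁺ → A_0⁺`. -/
def down (S : DirectiveSeq A0) : ∀ N : ℕ, Morphism (S.alph N) A0
  | 0 => S.mor0
  | N + 1 => (S.down N).comp (S.mor N)

/-- `σ_{[n+1, n+N+1)} : A_{n+N+1}⁺ → A_{n+1}⁺`. -/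
def seg (S : DirectiveSeq A0) (n : ℕ) : ∀ N : ℕ, Morphism (S.alph (n + N)) (S.alph n)
  | 0 => Morphism.id _
  | N + 1 => (S.seg n N).comp (S.mor (n + N))

/-- The generated S-adic subshift `X_σ = X_σ^{(0)}`. -/
def X0 (S : DirectiveSeq A0) : Set (ℤ → A0) :=
  {x | ∀ (i : ℤ) (m : ℕ), ∃ (N : ℕ) (a : S.alph N), subword x i m <:+: (S.down N).toFun a}

/-- The level `X_σ^{(n+1)}` of the S-adic subshift. -/
def levelSet (S : DirectiveSeq A0) (n : ℕ) : Set (ℤ → S.alph n) :=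
  {x | ∀ (i : ℤ) (m : ℕ), ∃ (N : ℕ) (a : S.alph (n + (N + 1))),
    subword x i m <:+: (S.seg n (N + 1)).toFun a}

/-- `⟨σ_{[0,N)}⟩ → ∞`. -/
def EverywhereGrowing (S : DirectiveSeq A0) : Prop :=
  ∀ m : ℕ, ∃ N0 : ℕ, ∀ N ≥ N0, ∀ a : S.alph N, m ≤ ((S.down N).toFun a).length

protected def Proper (S : DirectiveSeq A0) : Prop :=
  S.mor0.Proper ∧ ∀ n, (S.mor n).Proper

protected def LetterOnto (S : DirectiveSeq A0) : Prop :=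
  S.mor0.LetterOnto ∧ ∀ n, (S.mor n).LetterOnto

protected def Primitive (S : DirectiveSeq A0) : Prop :=
  (∃ N, (S.down N).Positive) ∧ ∀ n, ∃ N, (S.seg n (N + 1)).Positive

protected def Recognizable (S : DirectiveSeq A0) : Prop :=
  SAdicPaper.Recognizable (S.levelSet 0) S.mor0 ∧
    ∀ n, SAdicPaper.Recognizable (S.levelSet (n + 1)) (S.mor n)

/-- The alphabet rank `AR(σ) = liminf_n #A_n`. -/
noncomputable def rank (S : DirectiveSeq A0) : ℕ∞ :=
  Filter.liminf (fun n => (Fintype.card (S.alph n) : ℕ∞)) Filter.atTop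

/-- The contraction `(σ_{[n_k, n_{k+1})})_{k ∈ ℕ}` of a directive sequence. -/
def contract (S : DirectiveSeq A0) (n : ℕ → ℕ) (hn : StrictMono n) (h0 : n 0 = 0) :
    DirectiveSeq A0 where
  alph k := S.alph (n (k + 1) - 1)
  fin k := S.fin _
  mor0 := S.down (n 1 - 1)
  mor k := Morphism.castDom
    (congrArg S.alph
      (show (n (k + 1) - 1) + (n (k + 2) - n (k + 1)) = n (k + 2) - 1 by
        have h2 := hn (show 0 < k + 1 by omega)
        have h3 : n (k + 1) ≤ n (k + 2) := hn.monotone (by omega)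
        omega))
    (S.seg (n (k + 1) - 1) (n (k + 2) - n (k + 1)))

/-- `T` is a contraction of `S`. -/
def IsContraction (T S : DirectiveSeq A0) : Prop :=
  ∃ (n : ℕ → ℕ) (hn : StrictMono n) (h0 : n 0 = 0), T = S.contract n hn h0

/-- Two directive sequences are equivalent if both are contractions of a common one. -/
def Equivalent (S : DirectiveSeq A0) (T : DirectiveSeq A0) : Prop :=
  ∃ V : DirectiveSeq A0, IsContraction S V ∧ IsContraction T V

end DirectiveSeq

/-- `X` is generated by a proper, primitive and recognizable directive sequence of
alphabet rank at most `K`. -/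
def HasRankRep {A0 : Type} (X : Set (ℤ → A0)) (K : ℕ) : Prop :=
  ∃ S : DirectiveSeq A0, S.X0 = X ∧ S.Proper ∧ S.Primitive ∧ S.Recognizable ∧
    S.rank ≤ (K : ℕ∞)

/-- The topological rank of `X` equals `K`. -/
def TopRankEq {A0 : Type} (X : Set (ℤ → A0)) (K : ℕ) : Prop :=
  HasRankRep X K ∧ ∀ K' : ℕ, HasRankRep X K' → K ≤ K'

/-- A factor `φ : σ → τ` between directive sequences: `φ_0 : A_1⁺ → B_0⁺` (`phi0`) and
`φ_{n+1} : A_{n+1}⁺ → B_{n+1}⁺` (`phi n`), with `φ_0 = τ_0 ∘ φ_1` and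
`φ_n ∘ σ_n = τ_n ∘ φ_{n+1}` for `n ≥ 1`. -/
structure SeqFactor {A0 B0 : Type} (S : DirectiveSeq A0) (T : DirectiveSeq B0) where
  phi0 : Morphism (S.alph 0) B0
  phi : ∀ n, Morphism (S.alph n) (T.alph n)
  comm0 : phi0 = T.mor0.comp (phi 0)
  comm : ∀ n, (phi n).comp (S.mor n) = (T.mor n).comp (phi (n + 1))

namespace SeqFactor

variable {A0 B0 : Type} {S : DirectiveSeq A0} {T : DirectiveSeq B0}

def LetterOnto (F : SeqFactor S T) : Prop :=
  F.phi0.LetterOnto ∧ ∀ n, (F.phi n).LetterOnto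

def Proper (F : SeqFactor S T) : Prop :=
  F.phi0.Proper ∧ ∀ n, (F.phi n).Proper

end SeqFactor

end SAdicPaper

namespace SAdicPaper

section Aux

variable {A B C D : Type*}

namespace Morphism

theorem ext' {τ σ : Morphism A B} (h : ∀ a, τ.toFun a = σ.toFun a) : τ = σ := by
  cases τ; cases σ; simp only [mk.injEq]; exact funext h

theorem word_cons (τ : Morphism A B) (a : A) (w : List A) :
    τ.word (a :: w) = τ.toFun a ++ τ.word w := rfl

theorem word_nil (τ : Morphism A B) : τ.word [] = [] := rfl

theorem word_singleton (τ : Morphism A B) (a : A) : τ.word [a] = τ.toFun a := by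
  rw [word_cons, word_nil, List.append_nil]

theorem word_append (τ : Morphism A B) (w₁ w₂ : List A) :
    τ.word (w₁ ++ w₂) = τ.word w₁ ++ τ.word w₂ := by
  induction w₁ with
  | nil => rfl
  | cons a w ih => simp [word_cons, ih]

theorem comp_toFun (τ : Morphism B C) (σ : Morphism A B) (a : A) :
    (τ.comp σ).toFun a = τ.word (σ.toFun a) := rfl

theorem comp_word (τ : Morphism B C) (σ : Morphism A B) (w : List A) :
    (τ.comp σ).word w = τ.word (σ.word w) := by
  induction w with
  | nil => rfl
  | cons a w ih => rw [word_cons, word_cons, word_append, ih, comp_toFun]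

theorem comp_assoc (τ : Morphism C D) (σ : Morphism B C) (ρ : Morphism A B) :
    (τ.comp σ).comp ρ = τ.comp (σ.comp ρ) :=
  ext' fun a => by rw [comp_toFun, comp_toFun, comp_toFun, comp_word]

theorem length_word (τ : Morphism A B) (w : List A) : w.length ≤ (τ.word w).length := by
  induction w with
  | nil => simp [word_nil]
  | cons a w ih =>
    rw [word_cons, List.length_append, List.length_cons]
    have := List.length_pos_iff.mpr (τ.ne a)
    omega

theorem mem_word (τ : Morphism A B) {w : List A} {a : A} {c : B}
    (ha : a ∈ w) (hc : c ∈ τ.toFun a) : c ∈ τ.word w := by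
  induction w with
  | nil => simp at ha
  | cons x w ih =>
    rw [word_cons, List.mem_append]
    rcases List.mem_cons.mp ha with h | h
    · subst h; exact Or.inl hc
    · exact Or.inr (ih h)

end Morphism

/-- The Nielsen transformation `c ↦ dc`, identity on other letters. -/
def nielsen [DecidableEq A] (d c : A) : Morphism A A :=
  ⟨fun x => if x = c then [d, c] else [x], fun x => by split <;> simp⟩

/-- Replace the image of `c` by its suffix starting at position `k`. -/
def reduce [DecidableEq A] (σ : Morphism A B) (c : A) (k : ℕ)
    (hk : k < (σ.toFun c).length) : Morphism A B :=
  ⟨fun x => if x = c then (σ.toFun c).drop k else σ.toFun x,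
   fun x => by
     split
     · intro h
       have := congrArg List.length h
       simp only [List.length_drop, List.length_nil] at this
       omega
     · exact σ.ne x⟩

theorem reduce_comp_nielsen [DecidableEq A] (σ : Morphism A B) {c d : A} (hdc : d ≠ c)
    (hp : σ.toFun d <+: σ.toFun c) (hlt : (σ.toFun d).length < (σ.toFun c).length) :
    σ = (reduce σ c (σ.toFun d).length hlt).comp (nielsen d c) := by
  apply Morphism.ext'
  intro x
  rw [Morphism.comp_toFun]
  by_cases hx : x = c
  · rw [hx]
    have h0 : (nielsen d c).toFun c = [d, c] := by simp [nielsen]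
    rw [h0, Morphism.word_cons, Morphism.word_singleton]
    have h1 : (reduce σ c _ hlt).toFun d = σ.toFun d := by simp [reduce, hdc]
    have h2 : (reduce σ c _ hlt).toFun c = (σ.toFun c).drop (σ.toFun d).length := by
      simp [reduce]
    rw [h1, h2]
    obtain ⟨t, ht⟩ := hp
    rw [← ht, List.drop_left]
  · have h0 : (nielsen d c).toFun x = [x] := by simp [nielsen, hx]
    rw [h0, Morphism.word_singleton]
    simp [reduce, hx]

end Aux

/-- The quotient morphism collapsing `b` onto `a`. -/
def mergeQ {A : Type} [DecidableEq A] (a b : A) (hab : a ≠ b) :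
    Morphism A {x : A // x ≠ b} :=
  ⟨fun x => if h : x = b then [⟨a, hab⟩] else [⟨x, h⟩],
   fun x => by split <;> simp⟩

/-- Restriction of a morphism to the subalphabet avoiding `b`. -/
def restrictP {A B : Type} (σ : Morphism A B) (b : A) : Morphism {x : A // x ≠ b} B :=
  ⟨fun c => σ.toFun c.1, fun c => σ.ne c.1⟩

theorem mergeQ_letterOnto {A : Type} [DecidableEq A] (a b : A) (hab : a ≠ b) :
    (mergeQ a b hab).LetterOnto := by
  intro c
  refine ⟨c.1, ?_⟩
  have h : (mergeQ a b hab).toFun c.1 = [⟨c.1, c.2⟩] := by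
    simp only [mergeQ]
    rw [dif_neg c.2]
  rw [h]
  simp

theorem merge_comp {A B : Type} [DecidableEq A] (σ : Morphism A B) {a b : A} (hab : a ≠ b)
    (heq : σ.toFun a = σ.toFun b) : σ = (restrictP σ b).comp (mergeQ a b hab) := by
  apply Morphism.ext'
  intro x
  rw [Morphism.comp_toFun]
  by_cases hx : x = b
  · have h : (mergeQ a b hab).toFun x = [⟨a, hab⟩] := by simp only [mergeQ]; rw [dif_pos hx]
    rw [h, Morphism.word_singleton, hx]
    exact heq.symm
  · have h : (mergeQ a b hab).toFun x = [⟨x, hx⟩] := by simp only [mergeQ]; rw [dif_neg hx]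
    rw [h, Morphism.word_singleton]
    rfl

/-- The merge construction: if two distinct letters have identical images under every
`σ j`, the family factors through the alphabet with `b` removed. -/
theorem merge {A : Type} [Fintype A] {J : Type} (B : J → Type)
    (σ : ∀ j, Morphism A (B j)) (ℓ : A → ℕ)
    (hlen : ∀ j a, ((σ j).toFun a).length = ℓ a)
    (a b : A) (hab : a ≠ b) (heq : ∀ j, (σ j).toFun a = (σ j).toFun b) :
    ∃ (C : Type) (instC : Fintype C), @Fintype.card C instC < Fintype.card A ∧
      ∃ q : Morphism A C, q.LetterOnto ∧
        ∃ p : ∀ j, Morphism C (B j), (∀ j, σ j = (p j).comp q) ∧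
          ∃ M : C → ℕ, ∀ j c, ((p j).toFun c).length = M c := by
  classical
  refine ⟨{x : A // x ≠ b}, Subtype.fintype _, Fintype.card_subtype_lt (x := b) (by simp),
    mergeQ a b hab, mergeQ_letterOnto a b hab,
    fun j => restrictP (σ j) b, fun j => merge_comp (σ j) hab (heq j),
    fun c => ℓ c.1, fun j c => hlen j c.1⟩

theorem key (n : ℕ) : ∀ {A : Type} [Fintype A] {J : Type} [Nonempty J] (B : J → Type)
    (σ : ∀ j, Morphism A (B j)) (ℓ : A → ℕ),
    (∀ j a, ((σ j).toFun a).length = ℓ a) → (∑ a, ℓ a) ≤ n →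
    ∀ (u v : List A), u ≠ [] → v ≠ [] → (∑ a, ℓ a) ≤ u.length →
    u.head? ≠ v.head? → (∀ j, (σ j).word u <+: (σ j).word v) →
    ∃ (C : Type) (instC : Fintype C), @Fintype.card C instC < Fintype.card A ∧
      ∃ q : Morphism A C, q.LetterOnto ∧
        ∃ p : ∀ j, Morphism C (B j), (∀ j, σ j = (p j).comp q) ∧
          ∃ M : C → ℕ, ∀ j c, ((p j).toFun c).length = M c := by
  induction n with
  | zero =>
    intro A _ J _ B σ ℓ hlen hn u v hu hv hul hhead hpre
    obtain ⟨a, u₂, rfl⟩ := List.exists_cons_of_ne_nil hu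
    obtain ⟨j⟩ := ‹Nonempty J›
    have h1 : 1 ≤ ℓ a := (hlen j a) ▸ List.length_pos_iff.mpr ((σ j).ne a)
    have h2 : ℓ a ≤ ∑ x, ℓ x :=
      Finset.single_le_sum (fun _ _ => Nat.zero_le _) (Finset.mem_univ a)
    omega
  | succ n ih =>
    intro A _ J _ B σ ℓ hlen hn u v hu hv hul hhead hpre
    classical
    obtain ⟨a, u₂, rfl⟩ := List.exists_cons_of_ne_nil hu
    obtain ⟨b, v₂, rfl⟩ := List.exists_cons_of_ne_nil hv
    have hab : a ≠ b := by simpa using hhead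
    obtain ⟨j₀⟩ := ‹Nonempty J›
    have hpos : ∀ x, 1 ≤ ℓ x := fun x => (hlen j₀ x) ▸ List.length_pos_iff.mpr ((σ j₀).ne x)
    have hSab : ℓ a + ℓ b ≤ ∑ x, ℓ x := by
      have h := Finset.sum_le_sum_of_subset (Finset.subset_univ ({a, b} : Finset A))
        (f := ℓ)
      rwa [Finset.sum_pair hab] at h
    simp only [List.length_cons] at hul
    rcases lt_trichotomy (ℓ a) (ℓ b) with hlt | heqℓ | hgt
    · -- ℓ a < ℓ b : reduce b
      have hablen : ∀ j, (σ j).toFun a <+: (σ j).toFun b := by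
        intro j
        have h1 : (σ j).toFun a <+: (σ j).word (b :: v₂) :=
          List.IsPrefix.trans (by rw [Morphism.word_cons]; exact List.prefix_append _ _)
            (hpre j)
        refine List.prefix_of_prefix_length_le h1 ?_ ?_
        · rw [Morphism.word_cons]; exact List.prefix_append _ _
        · rw [hlen, hlen]; omega
      have hltlen : ∀ j, ((σ j).toFun a).length < ((σ j).toFun b).length := fun j => by
        rw [hlen, hlen]; exact hlt
      have hfact : ∀ j, σ j =
          (reduce (σ j) b ((σ j).toFun a).length (hltlen j)).comp (nielsen a b) :=
        fun j => reduce_comp_nielsen (σ j) hab (hablen j) (hltlen j)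
      have hw : ∀ j w, (reduce (σ j) b ((σ j).toFun a).length (hltlen j)).word
          ((nielsen a b).word w) = (σ j).word w := by
        intro j w
        rw [← Morphism.comp_word, ← hfact j]
      have hlen' : ∀ j x, ((reduce (σ j) b ((σ j).toFun a).length (hltlen j)).toFun x).length
          = (if x = b then ℓ b - ℓ a else ℓ x) := by
        intro j x
        by_cases hx : x = b
        · simp [reduce, hx, hlen j a, hlen j b]
        · simp [reduce, hx, hlen j x]
      have e1 : ∑ x, (if x = b then ℓ b - ℓ a else ℓ x)
          = (ℓ b - ℓ a) + ∑ x ∈ Finset.univ.erase b, ℓ x := by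
        rw [← Finset.add_sum_erase _ _ (Finset.mem_univ b)]
        congr 1
        · simp
        · refine Finset.sum_congr rfl fun x hx => ?_
          rw [if_neg (Finset.mem_erase.mp hx).1]
      have e2 : ∑ x, ℓ x = ℓ b + ∑ x ∈ Finset.univ.erase b, ℓ x :=
        (Finset.add_sum_erase _ _ (Finset.mem_univ b)).symm
      have hu₂ : u₂ ≠ [] := by
        intro h
        subst h
        simp only [List.length_nil] at hul
        have := hpos a; have := hpos b
        omega
      have hpre' : ∀ j, (reduce (σ j) b ((σ j).toFun a).length (hltlen j)).word
          ((nielsen a b).word u₂) <+: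
          (reduce (σ j) b ((σ j).toFun a).length (hltlen j)).word
          (b :: (nielsen a b).word v₂) := by
        intro j
        rw [hw, Morphism.word_cons, hw]
        have hb : (reduce (σ j) b ((σ j).toFun a).length (hltlen j)).toFun b
            = ((σ j).toFun b).drop ((σ j).toFun a).length := by simp [reduce]
        rw [hb]
        obtain ⟨t, ht⟩ := hpre j
        rw [Morphism.word_cons, Morphism.word_cons] at ht
        obtain ⟨s, hs⟩ := hablen j
        have hdrop : ((σ j).toFun b).drop ((σ j).toFun a).length = s := by
          rw [← hs, List.drop_left]
        rw [hdrop]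
        refine ⟨t, ?_⟩
        rw [← hs] at ht
        simp only [List.append_assoc] at ht ⊢
        exact List.append_cancel_left ht
      have hhead' : ((nielsen a b).word u₂).head? ≠ (b :: (nielsen a b).word v₂).head? := by
        obtain ⟨c, u₃, rfl⟩ := List.exists_cons_of_ne_nil hu₂
        rw [Morphism.word_cons]
        by_cases hc : c = b
        · have h0 : (nielsen a b).toFun c = [a, b] := by simp [nielsen, hc]
          rw [h0]
          simp [hab]
        · have h0 : (nielsen a b).toFun c = [c] := by simp [nielsen, hc]
          rw [h0]
          simp [hc]
      have hlenw := Morphism.length_word (nielsen a b) u₂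
      obtain ⟨C, instC, hcard, q', hq', p, hcomp', M, hM⟩ :=
        ih B (fun j => reduce (σ j) b ((σ j).toFun a).length (hltlen j))
          (fun x => if x = b then ℓ b - ℓ a else ℓ x) hlen'
          (by show (∑ x, (if x = b then ℓ b - ℓ a else ℓ x)) ≤ n
              have := hpos a; omega)
          ((nielsen a b).word u₂) (b :: (nielsen a b).word v₂)
          ((nielsen a b).word_ne hu₂) (List.cons_ne_nil _ _)
          (by show (∑ x, (if x = b then ℓ b - ℓ a else ℓ x)) ≤ ((nielsen a b).word u₂).length
              have := hpos a; omega) hhead' hpre'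
      refine ⟨C, instC, hcard, q'.comp (nielsen a b), ?_, p, ?_, M, hM⟩
      · intro c
        obtain ⟨x, hx⟩ := hq' c
        refine ⟨x, ?_⟩
        show c ∈ q'.word ((nielsen a b).toFun x)
        refine Morphism.mem_word _ ?_ hx
        by_cases hxb : x = b
        · simp [nielsen, hxb]
        · simp [nielsen, hxb]
      · intro j
        rw [hfact j, hcomp' j, Morphism.comp_assoc]
    · -- ℓ a = ℓ b : merge
      have heq : ∀ j, (σ j).toFun a = (σ j).toFun b := by
        intro j
        obtain ⟨t, ht⟩ := hpre j
        rw [Morphism.word_cons, Morphism.word_cons, List.append_assoc] at ht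
        exact (List.append_inj ht (by rw [hlen, hlen, heqℓ])).1
      exact merge B σ ℓ hlen a b hab heq
    · -- ℓ b < ℓ a : reduce a
      have hbalen : ∀ j, (σ j).toFun b <+: (σ j).toFun a := by
        intro j
        have h1 : (σ j).toFun a <+: (σ j).word (b :: v₂) :=
          List.IsPrefix.trans (by rw [Morphism.word_cons]; exact List.prefix_append _ _)
            (hpre j)
        have h2 : (σ j).toFun b <+: (σ j).word (b :: v₂) := by
          rw [Morphism.word_cons]; exact List.prefix_append _ _
        refine List.prefix_of_prefix_length_le h2 h1 ?_
        rw [hlen, hlen]; omega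
      have hltlen : ∀ j, ((σ j).toFun b).length < ((σ j).toFun a).length := fun j => by
        rw [hlen, hlen]; exact hgt
      have hfact : ∀ j, σ j =
          (reduce (σ j) a ((σ j).toFun b).length (hltlen j)).comp (nielsen b a) :=
        fun j => reduce_comp_nielsen (σ j) (Ne.symm hab) (hbalen j) (hltlen j)
      have hw : ∀ j w, (reduce (σ j) a ((σ j).toFun b).length (hltlen j)).word
          ((nielsen b a).word w) = (σ j).word w := by
        intro j w
        rw [← Morphism.comp_word, ← hfact j]
      have hlen' : ∀ j x, ((reduce (σ j) a ((σ j).toFun b).length (hltlen j)).toFun x).length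
          = (if x = a then ℓ a - ℓ b else ℓ x) := by
        intro j x
        by_cases hx : x = a
        · simp [reduce, hx, hlen j a, hlen j b]
        · simp [reduce, hx, hlen j x]
      have e1 : ∑ x, (if x = a then ℓ a - ℓ b else ℓ x)
          = (ℓ a - ℓ b) + ∑ x ∈ Finset.univ.erase a, ℓ x := by
        rw [← Finset.add_sum_erase _ _ (Finset.mem_univ a)]
        congr 1
        · simp
        · refine Finset.sum_congr rfl fun x hx => ?_
          rw [if_neg (Finset.mem_erase.mp hx).1]
      have e2 : ∑ x, ℓ x = ℓ a + ∑ x ∈ Finset.univ.erase a, ℓ x :=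
        (Finset.add_sum_erase _ _ (Finset.mem_univ a)).symm
      have hv₂ : v₂ ≠ [] := by
        intro h
        subst h
        have h1 := (hpre j₀).length_le
        have h2 := Morphism.length_word (σ j₀) (a :: u₂)
        have h3 : ((σ j₀).word (b :: ([] : List A))).length = ℓ b := by
          rw [Morphism.word_singleton, hlen]
        have h4 : (a :: u₂).length = u₂.length + 1 := by simp
        have := hpos a
        omega
      have hpre' : ∀ j, (reduce (σ j) a ((σ j).toFun b).length (hltlen j)).word
          (a :: (nielsen b a).word u₂) <+:
          (reduce (σ j) a ((σ j).toFun b).length (hltlen j)).word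
          ((nielsen b a).word v₂) := by
        intro j
        rw [hw, Morphism.word_cons, hw]
        have ha' : (reduce (σ j) a ((σ j).toFun b).length (hltlen j)).toFun a
            = ((σ j).toFun a).drop ((σ j).toFun b).length := by simp [reduce]
        rw [ha']
        obtain ⟨t, ht⟩ := hpre j
        rw [Morphism.word_cons, Morphism.word_cons] at ht
        obtain ⟨s, hs⟩ := hbalen j
        have hdrop : ((σ j).toFun a).drop ((σ j).toFun b).length = s := by
          rw [← hs, List.drop_left]
        rw [hdrop]
        refine ⟨t, ?_⟩
        rw [← hs] at ht
        simp only [List.append_assoc] at ht ⊢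
        exact List.append_cancel_left ht
      have hhead' : (a :: (nielsen b a).word u₂).head? ≠
          ((nielsen b a).word v₂).head? := by
        obtain ⟨c, v₃, rfl⟩ := List.exists_cons_of_ne_nil hv₂
        rw [Morphism.word_cons (nielsen b a) c v₃]
        by_cases hc : c = a
        · have h0 : (nielsen b a).toFun c = [b, a] := by simp [nielsen, hc]
          rw [h0]
          simp [hab]
        · have h0 : (nielsen b a).toFun c = [c] := by simp [nielsen, hc]
          rw [h0]
          simp
          exact fun h => hc h.symm
      have hlenw := Morphism.length_word (nielsen b a) u₂
      obtain ⟨C, instC, hcard, q', hq', p, hcomp', M, hM⟩ :=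
        ih B (fun j => reduce (σ j) a ((σ j).toFun b).length (hltlen j))
          (fun x => if x = a then ℓ a - ℓ b else ℓ x) hlen'
          (by show (∑ x, (if x = a then ℓ a - ℓ b else ℓ x)) ≤ n
              have := hpos b; omega)
          (a :: (nielsen b a).word u₂) ((nielsen b a).word v₂)
          (List.cons_ne_nil _ _) ((nielsen b a).word_ne hv₂)
          (by show (∑ x, (if x = a then ℓ a - ℓ b else ℓ x)) ≤
                (a :: (nielsen b a).word u₂).length
              simp only [List.length_cons]; have := hpos b; omega) hhead' hpre'
      refine ⟨C, instC, hcard, q'.comp (nielsen b a), ?_, p, ?_, M, hM⟩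
      · intro c
        obtain ⟨x, hx⟩ := hq' c
        refine ⟨x, ?_⟩
        show c ∈ q'.word ((nielsen b a).toFun x)
        refine Morphism.mem_word _ ?_ hx
        by_cases hxa : x = a
        · simp [nielsen, hxa]
        · simp [nielsen, hxa]
      · intro j
        rw [hfact j, hcomp' j, Morphism.comp_assoc]

/-- if the morphisms `σ_j : A⁺ → B_j⁺` have `j`-independent letter image
lengths `ℓ_a`, and `σ_j(u)` is a prefix of `σ_j(v)` for all `j`, where `|u| ≥ ∑_a ℓ_a`
and `u, v` start with different letters, then the `σ_j` factor through a common
letter-onto morphism `q : A⁺ → C⁺` with `#C < #A`, with `j`-independent lengths. -/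
theorem statement10 {A : Type} [Fintype A] {J : Type} (B : J → Type)
    (σ : ∀ j, Morphism A (B j)) (ℓ : A → ℕ)
    (hlen : ∀ j a, ((σ j).toFun a).length = ℓ a)
    (u v : List A) (hu : u ≠ []) (hv : v ≠ [])
    (hul : (∑ a, ℓ a) ≤ u.length)
    (hhead : u.head? ≠ v.head?)
    (hpre : ∀ j, (σ j).word u <+: (σ j).word v) :
    ∃ (C : Type) (instC : Fintype C), @Fintype.card C instC < Fintype.card A ∧
      ∃ q : Morphism A C, q.LetterOnto ∧
        ∃ p : ∀ j, Morphism C (B j), (∀ j, σ j = (p j).comp q) ∧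
          ∃ M : C → ℕ, ∀ j c, ((p j).toFun c).length = M c := by
  by_cases hJ : Nonempty J
  · exact key (∑ a, ℓ a) B σ ℓ hlen le_rfl u v hu hv hul hhead hpre
  · have hJ' : IsEmpty J := not_nonempty_iff.mp hJ
    obtain ⟨a, u₂, rfl⟩ := List.exists_cons_of_ne_nil hu
    obtain ⟨b, v₂, rfl⟩ := List.exists_cons_of_ne_nil hv
    have hab : a ≠ b := by simpa using hhead
    exact merge B σ ℓ hlen a b hab (fun j => hJ'.elim j)

end SAdicPaper
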